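/- Let K and M be real symmetric n×n matrices with M positive definite and K positive semidefinite, let η ≥ 0, s > 0 with xᵀKx ≤ s·xᵀMx for all x ∈ ℝⁿ, and suppose A_I := K + ηM is invertible. Let G be a real n×m matrix, A_Γ a real symmetric m×m matrix, κ ≥ 0, and define B := Gᵀ A_I⁻¹ G. Assume that for every φ ∈ ℝᵐ, with u := −A_I⁻¹Gφ, the coercivity estimate (1/2)·φᵀA_Γφ − φᵀBφ ≥ η·uᵀMu + κ·φᵀφ holds. Then for every φ ∈ ℝᵐ: φᵀBφ ≤ ((s+η)/(s+2η)) · ( (1/2)·φᵀA_Γφ − κ·φᵀφ ). -/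

import Mathlib

open scoped Matrix

theorem stmt_13
    {n m : ℕ} (K M : Matrix (Fin n) (Fin n) ℝ)
    (hK : K.IsSymm) (hM : M.IsSymm) (hMpd : M.PosDef) (hKpsd : K.PosSemidef)
    (η s : ℝ) (hη : 0 ≤ η) (hs : 0 < s)
    (hKM : ∀ x : Fin n → ℝ, x ⬝ᵥ K.mulVec x ≤ s * (x ⬝ᵥ M.mulVec x))
    (A_I : Matrix (Fin n) (Fin n) ℝ) (hAI : A_I = K + η • M) (hAIinv : IsUnit A_I)
    (G : Matrix (Fin n) (Fin m) ℝ)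
    (A_Γ : Matrix (Fin m) (Fin m) ℝ) (hAΓ : A_Γ.IsSymm)
    (κ : ℝ) (hκ : 0 ≤ κ)
    (B : Matrix (Fin m) (Fin m) ℝ) (hBdef : B = Gᵀ * A_I⁻¹ * G)
    (hcoerc : ∀ φ : Fin m → ℝ,
      (1 / 2) * (φ ⬝ᵥ A_Γ.mulVec φ) - φ ⬝ᵥ B.mulVec φ ≥
        η * ((-(A_I⁻¹.mulVec (G.mulVec φ))) ⬝ᵥ
            M.mulVec (-(A_I⁻¹.mulVec (G.mulVec φ)))) +
          κ * (φ ⬝ᵥ φ)) :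
    ∀ φ : Fin m → ℝ,
      φ ⬝ᵥ B.mulVec φ ≤
        ((s + η) / (s + 2 * η)) *
          ((1 / 2) * (φ ⬝ᵥ A_Γ.mulVec φ) - κ * (φ ⬝ᵥ φ)) := by
  intro φ
  have hdet : IsUnit A_I.det := (Matrix.isUnit_iff_isUnit_det A_I).mp hAIinv
  set v : Fin n → ℝ := A_I⁻¹.mulVec (G.mulVec φ) with hv
  -- G φ = A_I v
  have hGv : G.mulVec φ = A_I.mulVec v := by
    rw [hv, Matrix.mulVec_mulVec, Matrix.mul_nonsing_inv A_I hdet, Matrix.one_mulVec]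
  -- φᵀ B φ = v ⬝ᵥ A_I v
  have h1 : φ ⬝ᵥ B.mulVec φ = v ⬝ᵥ A_I.mulVec v := by
    rw [hBdef]
    have : (Gᵀ * A_I⁻¹ * G).mulVec φ = Gᵀ.mulVec v := by
      rw [hv, ← Matrix.mulVec_mulVec, ← Matrix.mulVec_mulVec]
    rw [this, Matrix.dotProduct_mulVec, Matrix.vecMul_transpose, hGv,
      dotProduct_comm]
  -- v ⬝ᵥ A_I v ≤ (s+η) * v ⬝ᵥ M v
  have h2 : v ⬝ᵥ A_I.mulVec v ≤ (s + η) * (v ⬝ᵥ M.mulVec v) := by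
    rw [hAI, Matrix.add_mulVec, Matrix.smul_mulVec, dotProduct_add,
      dotProduct_smul, smul_eq_mul]
    nlinarith [hKM v]
  have hq : 0 ≤ v ⬝ᵥ M.mulVec v := by
    have := hMpd.posSemidef.dotProduct_mulVec_nonneg v
    simpa using this
  have hc := hcoerc φ
  have hneg : (-(A_I⁻¹.mulVec (G.mulVec φ))) ⬝ᵥ
      M.mulVec (-(A_I⁻¹.mulVec (G.mulVec φ))) = v ⬝ᵥ M.mulVec v := by
    rw [← hv, Matrix.mulVec_neg, neg_dotProduct, dotProduct_neg, neg_neg]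
  rw [hneg] at hc
  set b := φ ⬝ᵥ B.mulVec φ
  set q := v ⬝ᵥ M.mulVec v
  set R := (1 / 2) * (φ ⬝ᵥ A_Γ.mulVec φ) - κ * (φ ⬝ᵥ φ)
  have hb : b ≤ (s + η) * q := h1 ▸ h2
  have hc' : R - b ≥ η * q := by
    have hκφ : 0 ≤ κ * (φ ⬝ᵥ φ) := mul_nonneg hκ (by simpa using dotProduct_self_star_nonneg φ)
    simp only [R]
    linarith [hc]
  have hpos : 0 < s + 2 * η := by linarith
  rw [div_mul_eq_mul_div, le_div_iff₀ hpos]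
  nlinarith [mul_le_mul_of_nonneg_left hb hη]
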